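/- With the type D alphabet and two-row insertion rules as above, suppose α' ≤ α (in particular (α, α') ∉ {(n, n̄), (n̄, n)}). If inserting α into a two-row semistandard D tableau T adds a new box at the end of the first row, then inserting α' into (α → T) also adds a new box at the end of the first row. -/
import Mathlib


/-- A column with at most two boxes: `one β`, or `two α β` with `α` above `β`.
A tableau with at most two rows is a list of such columns, read left to right. -/
inductive DCol : Type
  | one (β : ℕ)
  | two (α β : ℕ)

/-- The type `D` alphabet `1 < ⋯ < n−1 < {n, n̄} < n−1̄ < ⋯ < 1̄` (with `n`, `n̄`
incomparable) is encoded as `{1, …, 2n}` with `x̄ = 2n+1−x` (so `n̄ = n+1`). -/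
def barD (n x : ℕ) : ℕ := 2 * n + 1 - x

/-- The partial order on the type `D` alphabet: the natural order on the codes
except that `n` (code `n`) and `n̄` (code `n+1`) are incomparable. -/
def dle (n a b : ℕ) : Prop := a ≤ b ∧ ¬(a = n ∧ b = n + 1)

/-- The strict partial order on the type `D` alphabet. -/
def dlt (n a b : ℕ) : Prop := a < b ∧ ¬(a = n ∧ b = n + 1)

/-- Validity of a single column of a semistandard `D` tableau: letters lie in
the alphabet, a two-box column `(α above β)` satisfies `α < β` or
`(α,β) ∈ {(n,n̄),(n̄,n)}`, and no column equals `(1 above 1̄)`. -/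
def DColOK (n : ℕ) : DCol → Prop
  | .one β => 1 ≤ β ∧ β ≤ 2 * n
  | .two α β => 1 ≤ α ∧ β ≤ 2 * n ∧
      (dlt n α β ∨ (α = n ∧ β = n + 1) ∨ (α = n + 1 ∧ β = n)) ∧
      ¬(α = 1 ∧ β = 2 * n)

/-- Conditions on two adjacent columns of a semistandard `D` tableau: two-box
columns lie to the left of one-box columns, both rows are weakly increasing in
the partial order, the `(x,x)`-configurations (`1 ≤ x < n`), the two forbidden
`2×2` configurations `((n−1 above n),(n above n−1̄))` and
`((n−1 above n̄),(n̄ above n−1̄))`, and the `(n,n)`-configurations (lower-left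
and upper-right entries both in `{n,n̄}`) are all absent. -/
def DAdjOK (n : ℕ) : DCol → DCol → Prop
  | .one α, .one α' => dle n α α'
  | .one _, .two _ _ => False
  | .two α β, .one α' => dle n α α' ∧
      ¬((β = n ∨ β = n + 1) ∧ (α' = n ∨ α' = n + 1))
  | .two α β, .two α' β' => dle n α α' ∧ dle n β β' ∧
      ¬((β = n ∨ β = n + 1) ∧ (α' = n ∨ α' = n + 1)) ∧
      ¬(∃ x, 1 ≤ x ∧ x < n ∧
        ((α = x ∧ α' = x ∧ β' = barD n x) ∨ (α = x ∧ β = barD n x ∧ β' = barD n x))) ∧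
      ¬(α = n - 1 ∧ β = n ∧ α' = n ∧ β' = n + 2) ∧
      ¬(α = n - 1 ∧ β = n + 1 ∧ α' = n + 1 ∧ β' = n + 2)

/-- A semistandard `D` tableau with at most two rows, as a list of columns. -/
def SemistdD (n : ℕ) (cols : List DCol) : Prop :=
  (∀ c ∈ cols, DColOK n c) ∧ List.Chain' (DAdjOK n) cols

/-- `RunD n a cols cols' route`: the type `D` column insertion of the letter `a`
into the tableau `cols` (elementary rules A0, A1, B0–B8) yields the tableau
`cols'`; `route` records, column by column along the bumping route, whether the
newly set letter lies in the first row (`true`) or in the second row (`false`). -/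
inductive RunD (n : ℕ) : ℕ → List DCol → List DCol → List Bool → Prop
  | a0 (a : ℕ) :
      RunD n a [] [DCol.one a] [true]
  | a1 (a β : ℕ) (rest : List DCol)
      (h : dlt n β a ∨ (β = n ∧ a = n + 1) ∨ (β = n + 1 ∧ a = n)) :
      RunD n a (DCol.one β :: rest) (DCol.two β a :: rest) [false]
  | b0 (a β : ℕ) (rest rest' : List DCol) (route : List Bool)
      (h : dle n a β)
      (hr : RunD n β rest rest' route) :
      RunD n a (DCol.one β :: rest) (DCol.one a :: rest') (true :: route)
  | b1 (a α γ : ℕ) (rest rest' : List DCol) (route : List Bool)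
      (h1 : dlt n α a) (h2 : dle n a γ) (h3 : ¬(1 ≤ α ∧ α ≤ n ∧ γ = barD n α))
      (hr : RunD n γ rest rest' route) :
      RunD n a (DCol.two α γ :: rest) (DCol.two α a :: rest') (false :: route)
  | b2 (a β γ : ℕ) (rest rest' : List DCol) (route : List Bool)
      (h1 : dle n a β) (h2 : dlt n β γ) (h3 : ¬(1 ≤ a ∧ a ≤ n ∧ γ = barD n a))
      (hr : RunD n β rest rest' route) :
      RunD n a (DCol.two β γ :: rest) (DCol.two a γ :: rest') (true :: route)
  | b3 (x β : ℕ) (rest rest' : List DCol) (route : List Bool)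
      (hx1 : 2 ≤ x) (hx2 : x < n) (h1 : dle n x β) (h2 : dle n β (barD n x))
      (hr : RunD n (barD n (x - 1)) rest rest' route) :
      RunD n β (DCol.two x (barD n x) :: rest)
        (DCol.two (x - 1) β :: rest') (false :: route)
  | b4 (x β : ℕ) (rest rest' : List DCol) (route : List Bool)
      (hx1 : 1 ≤ x) (hx2 : x + 1 < n) (h1 : dlt n x β) (h2 : dlt n β (barD n x))
      (hr : RunD n β rest rest' route) :
      RunD n x (DCol.two β (barD n x) :: rest)
        (DCol.two (x + 1) (barD n (x + 1)) :: rest') (true :: route)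
  | b5 (x μ₁ μ₂ : ℕ) (rest rest' : List DCol) (route : List Bool)
      (hx1 : 1 ≤ x) (hx2 : x < n)
      (hμ : (μ₁ = n ∧ μ₂ = n + 1) ∨ (μ₁ = n + 1 ∧ μ₂ = n))
      (hr : RunD n μ₁ rest rest' route) :
      RunD n x (DCol.two μ₁ μ₂ :: rest) (DCol.two x μ₂ :: rest') (true :: route)
  | b6 (x μ₁ μ₂ : ℕ) (rest rest' : List DCol) (route : List Bool)
      (hx1 : 1 ≤ x) (hx2 : x < n)
      (hμ : (μ₁ = n ∧ μ₂ = n + 1) ∨ (μ₁ = n + 1 ∧ μ₂ = n))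
      (hr : RunD n (barD n x) rest rest' route) :
      RunD n μ₂ (DCol.two μ₁ (barD n x) :: rest)
        (DCol.two μ₁ μ₂ :: rest') (false :: route)
  | b7 (μ : ℕ) (rest rest' : List DCol) (route : List Bool)
      (hμ : μ = n ∨ μ = n + 1)
      (hr : RunD n μ rest rest' route) :
      RunD n (n - 1) (DCol.two μ (n + 2) :: rest)
        (DCol.two μ (2 * n + 1 - μ) :: rest') (true :: route)
  | b8 (μ₁ μ₂ : ℕ) (rest rest' : List DCol) (route : List Bool)
      (hμ : (μ₁ = n ∧ μ₂ = n + 1) ∨ (μ₁ = n + 1 ∧ μ₂ = n))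
      (hr : RunD n (n + 2) rest rest' route) :
      RunD n μ₂ (DCol.two μ₁ μ₂ :: rest)
        (DCol.two (n - 1) μ₂ :: rest') (false :: route)



theorem keyD (n : ℕ) (hn : 2 ≤ n) : ∀ {a cols cols₁ r₁}, RunD n a cols cols₁ r₁ →
    cols₁.length = cols.length + 1 →
    ∀ {b cols₂ r₂}, dle n b a → RunD n b cols₁ cols₂ r₂ →
    cols₂.length = cols₁.length + 1 := by
  intro a cols cols₁ r₁ h1
  induction h1 with
  | a0 a =>
    intro hfirst b cols₂ r₂ hba h2
    cases h2 with
    | a1 _ _ _ h => exfalso; simp only [dle, dlt] at *; omega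
    | b0 _ _ _ _ _ h hr => cases hr; simp
  | a1 a β rest h =>
    intro hfirst
    exfalso; simp only [List.length_cons] at hfirst; omega
  | b0 a β rest rest' route h hr ih =>
    intro hfirst b cols₂ r₂ hba h2
    simp only [List.length_cons] at hfirst
    cases h2 <;>
      first
        | (exfalso; simp only [dle, dlt, barD, and_true, true_and, not_true, not_false_iff] at *; omega)
        | (rename_i hr2
           simp only [List.length_cons]
           have hx := ih (by omega) (by simp only [dle, dlt, barD, and_true, true_and, not_true, not_false_iff] at *; omega) hr2
           omega)
  | b1 a α γ rest rest' route q1 q2 q3 hr ih =>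
    intro hfirst b cols₂ r₂ hba h2
    simp only [List.length_cons] at hfirst
    cases h2 <;>
      first
        | (exfalso; simp only [dle, dlt, barD, and_true, true_and, not_true, not_false_iff] at *; omega)
        | (rename_i hr2
           simp only [List.length_cons]
           have hx := ih (by omega) (by simp only [dle, dlt, barD, and_true, true_and, not_true, not_false_iff] at *; omega) hr2
           omega)
  | b2 a β γ rest rest' route q1 q2 q3 hr ih =>
    intro hfirst b cols₂ r₂ hba h2
    simp only [List.length_cons] at hfirst
    cases h2 <;>
      first
        | (exfalso; simp only [dle, dlt, barD, and_true, true_and, not_true, not_false_iff] at *; omega)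
        | (rename_i hr2
           simp only [List.length_cons]
           have hx := ih (by omega) (by simp only [dle, dlt, barD, and_true, true_and, not_true, not_false_iff] at *; omega) hr2
           omega)
  | b3 x β rest rest' route qx1 qx2 q1 q2 hr ih =>
    intro hfirst b cols₂ r₂ hba h2
    simp only [List.length_cons] at hfirst
    generalize hg : x - 1 = p at h2
    cases h2 <;>
      first
        | (exfalso; simp only [dle, dlt, barD, and_true, true_and, not_true, not_false_iff] at *; omega)
        | (rename_i hr2
           simp only [List.length_cons]
           have hx := ih (by omega) (by simp only [dle, dlt, barD, and_true, true_and, not_true, not_false_iff] at *; omega) hr2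
           omega)
  | b4 x β rest rest' route qx1 qx2 q1 q2 hr ih =>
    intro hfirst b cols₂ r₂ hba h2
    simp only [List.length_cons] at hfirst
    generalize hg2 : barD n (x + 1) = q at h2
    generalize hg1 : x + 1 = p at h2
    cases h2 <;>
      first
        | (exfalso; simp only [dle, dlt, barD, and_true, true_and, not_true, not_false_iff] at *; omega)
        | (rename_i hr2
           simp only [List.length_cons]
           have hx := ih (by omega) (by simp only [dle, dlt, barD, and_true, true_and, not_true, not_false_iff] at *; omega) hr2
           omega)
  | b5 x μ₁ μ₂ rest rest' route qx1 qx2 qμ hr ih =>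
    intro hfirst b cols₂ r₂ hba h2
    simp only [List.length_cons] at hfirst
    cases h2 <;>
      first
        | (exfalso; simp only [dle, dlt, barD, and_true, true_and, not_true, not_false_iff] at *; omega)
        | (rename_i hr2
           simp only [List.length_cons]
           have hx := ih (by omega) (by simp only [dle, dlt, barD, and_true, true_and, not_true, not_false_iff] at *; omega) hr2
           omega)
  | b6 x μ₁ μ₂ rest rest' route qx1 qx2 qμ hr ih =>
    intro hfirst b cols₂ r₂ hba h2
    simp only [List.length_cons] at hfirst
    cases h2 <;>
      first
        | (exfalso; simp only [dle, dlt, barD, and_true, true_and, not_true, not_false_iff] at *; omega)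
        | (rename_i hr2
           simp only [List.length_cons]
           have hx := ih (by omega) (by simp only [dle, dlt, barD, and_true, true_and, not_true, not_false_iff] at *; omega) hr2
           omega)
  | b7 μ rest rest' route qμ hr ih =>
    intro hfirst b cols₂ r₂ hba h2
    simp only [List.length_cons] at hfirst
    generalize hg : 2 * n + 1 - μ = q at h2
    cases h2 <;>
      first
        | (exfalso; simp only [dle, dlt, barD, and_true, true_and, not_true, not_false_iff] at *; omega)
        | (rename_i hr2
           simp only [List.length_cons]
           have hx := ih (by omega) (by simp only [dle, dlt, barD, and_true, true_and, not_true, not_false_iff] at *; omega) hr2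
           omega)
  | b8 μ₁ μ₂ rest rest' route qμ hr ih =>
    intro hfirst b cols₂ r₂ hba h2
    simp only [List.length_cons] at hfirst
    generalize hg : n - 1 = p at h2
    cases h2 <;>
      first
        | (exfalso; simp only [dle, dlt, barD, and_true, true_and, not_true, not_false_iff] at *; omega)
        | (rename_i hr2
           simp only [List.length_cons]
           have hx := ih (by omega) (by simp only [dle, dlt, barD, and_true, true_and, not_true, not_false_iff] at *; omega) hr2
           omega)

/-- Corollary of the type `D` column bumping lemma: if `α' ≤ α` in the type `D`
partial order (in particular `(α,α') ∉ {(n,n̄),(n̄,n)}`), and inserting `α` into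
a two-row semistandard `D` tableau `T` adds a new box at the end of the first
row (i.e. creates a new column), then inserting `α'` into `(α → T)` also adds a
new box at the end of the first row. -/
theorem stmt_12 (n : ℕ) (hn : 2 ≤ n) (α α' : ℕ)
    (hv1 : 1 ≤ α') (hv2 : α ≤ 2 * n) (hle : dle n α' α)
    (T T₁ T₂ : List DCol) (r₁ r₂ : List Bool)
    (hT : SemistdD n T)
    (h1 : RunD n α T T₁ r₁) (hfirst : T₁.length = T.length + 1)
    (h2 : RunD n α' T₁ T₂ r₂) :
    T₂.length = T₁.length + 1 := by
  exact keyD n hn h1 hfirst hle h2
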